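/- Let τ_1 ≠ τ_2 be proper subsets of {1,...,s}, w_1 ∈ M_{τ_1}, w_2 ∈ M_{τ_2}. Then ((∩_{j∈[s]∖τ_1}Q_j ∩ w_1·S_{τ_1})·S_{τ_1}[x_{r+1},...,x_n]) ∩ ((∩_{j∈[s]∖τ_2}Q_j ∩ w_2·S_{τ_2})·S_{τ_2}[x_{r+1},...,x_n]) = 0 as K-vector spaces. -/

import Mathlib

open MvPolynomial

/-- The `K`-span of the monomials with exponent vectors in `E`. -/
noncomputable def monSpan (K : Type*) [Field K] {n : ℕ} (E : Set (Fin n →₀ ℕ)) :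
    Submodule K (MvPolynomial (Fin n) K) :=
  Submodule.span K ((fun d => monomial d (1 : K)) '' E)

/-- A monomial ideal is *irreducible* if it is generated by pure powers of variables with
positive exponents. -/
def IsPurePowerIdeal {K : Type*} [Field K] {n : ℕ}
    (Q : Ideal (MvPolynomial (Fin n) K)) : Prop :=
  ∃ (T : Finset (Fin n)) (a : Fin n → ℕ), (∀ i ∈ T, 0 < a i) ∧
    Q = Ideal.span ((fun i => (X i : MvPolynomial (Fin n) K) ^ a i) '' (T : Set (Fin n)))

/-- The set of variables of `S_τ`: those `x_i` with `i ≤ r` and `x_i ∉ Σ_{j ∈ τ} √(Q j)`. -/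
def Zvars {K : Type*} [Field K] {n s : ℕ} (r : ℕ)
    (Q : Fin s → Ideal (MvPolynomial (Fin n) K)) (τ : Finset (Fin s)) : Set (Fin n) :=
  {i | (i : ℕ) < r ∧ (X i : MvPolynomial (Fin n) K) ∉ ∑ j ∈ τ, (Q j).radical}

/-- The exponent vectors of the monomials of
`M_τ = {u ∈ Mon(S') | u ∉ Σ_{j ∈ τ} Q j} ∩ K[x_i : x_i ∈ Σ_{j ∈ τ} √(Q j)]`,
where `S' = K[x_1, ..., x_r]`. -/
def Mexp {K : Type*} [Field K] {n s : ℕ} (r : ℕ)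
    (Q : Fin s → Ideal (MvPolynomial (Fin n) K)) (τ : Finset (Fin s)) :
    Set (Fin n →₀ ℕ) :=
  {u | (u.support : Set (Fin n)) ⊆ {i | (i : ℕ) < r} ∧
    monomial u (1 : K) ∉ ∑ j ∈ τ, Q j ∧
    (u.support : Set (Fin n)) ⊆
      {i | (X i : MvPolynomial (Fin n) K) ∈ ∑ j ∈ τ, (Q j).radical}}

/-- The summand `u·S''` of the decomposition, for a monomial `u` of `S' \ Q`:
the `K`-span of the monomials `u·v` with `v` a monomial of `S'' = K[x_{r+1}, ..., x_n]`. -/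
noncomputable def uSummand {K : Type*} [Field K] {n : ℕ} (r : ℕ) (u : Fin n →₀ ℕ) :
    Submodule K (MvPolynomial (Fin n) K) :=
  monSpan K {d | ∃ e : Fin n →₀ ℕ, (e.support : Set (Fin n)) ⊆ {i | r ≤ (i : ℕ)} ∧ d = u + e}

/-- The summand `(⋂_{j ∈ [s] \ τ} Q j ∩ w·S_τ)·S_τ[x_{r+1}, ..., x_n]` of the
decomposition: the `K`-span of the monomials `m·v` where `m ∈ ⋂_{j ∉ τ} Q j`,
`m ∈ w·S_τ` and `v` is a monomial of `S_τ[x_{r+1}, ..., x_n]`. -/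
noncomputable def tauSummand {K : Type*} [Field K] {n s : ℕ} (r : ℕ)
    (Q : Fin s → Ideal (MvPolynomial (Fin n) K)) (τ : Finset (Fin s)) (w : Fin n →₀ ℕ) :
    Submodule K (MvPolynomial (Fin n) K) :=
  monSpan K {d | ∃ m v : Fin n →₀ ℕ, d = m + v ∧
    monomial m (1 : K) ∈ (⨅ j ∈ τᶜ, Q j) ∧
    (∃ e : Fin n →₀ ℕ, (e.support : Set (Fin n)) ⊆ Zvars r Q τ ∧ m = w + e) ∧
    (v.support : Set (Fin n)) ⊆ Zvars r Q τ ∪ {i | r ≤ (i : ℕ)}}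


lemma coeff_eq_zero_of_mem_monSpan {K : Type*} [Field K] {n : ℕ} {E : Set (Fin n →₀ ℕ)}
    {p : MvPolynomial (Fin n) K} (hp : p ∈ monSpan K E) {d : Fin n →₀ ℕ} (hd : d ∉ E) :
    coeff d p = 0 := by
  refine Submodule.span_induction ?_ ?_ ?_ ?_ hp
  · rintro x ⟨e, he, rfl⟩
    rw [coeff_monomial]
    split_ifs with h
    · exact absurd (h ▸ he) hd
    · rfl
  · simp
  · intro x y _ _ hx hy; simp [coeff_add, hx, hy]
  · intro c x _ hx; simp [coeff_smul, hx]

lemma monSpan_disjoint {K : Type*} [Field K] {n : ℕ} {E₁ E₂ : Set (Fin n →₀ ℕ)}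
    (h : ∀ d, d ∈ E₁ → d ∉ E₂) : monSpan K E₁ ⊓ monSpan K E₂ = ⊥ := by
  rw [eq_bot_iff]
  rintro p ⟨h1, h2⟩
  ext d
  by_cases hd : d ∈ E₁
  · exact coeff_eq_zero_of_mem_monSpan h2 (h d hd)
  · exact coeff_eq_zero_of_mem_monSpan h1 hd

lemma monomial_mem_pure_power_span {K : Type*} [Field K] {n : ℕ} (T : Finset (Fin n))
    (a : Fin n → ℕ) (u : Fin n →₀ ℕ) :
    monomial u (1 : K) ∈
      Ideal.span ((fun i => (X i : MvPolynomial (Fin n) K) ^ a i) '' (T : Set (Fin n))) ↔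
      ∃ i ∈ T, a i ≤ u i := by
  have himg : (fun i => (X i : MvPolynomial (Fin n) K) ^ a i) '' (T : Set (Fin n)) =
      (fun d => monomial d (1 : K)) '' ((fun i => Finsupp.single i (a i)) '' (T : Set (Fin n))) := by
    rw [Set.image_image]
    exact Set.image_congr fun i _ => X_pow_eq_monomial
  rw [himg, mem_ideal_span_monomial_image]
  simp [Finsupp.single_le_iff]

lemma key_lemma {K : Type*} [Field K] {n s : ℕ} {r : ℕ}
    {Q : Fin s → Ideal (MvPolynomial (Fin n) K)}
    (hirr : ∀ j, IsPurePowerIdeal (Q j))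
    {τ₁ τ₂ : Finset (Fin s)} {j : Fin s} (hj1 : j ∉ τ₁) (hj2 : j ∈ τ₂)
    {w₁ w₂ : Fin n →₀ ℕ} (hw₁ : w₁ ∈ Mexp r Q τ₁) (hw₂ : w₂ ∈ Mexp r Q τ₂)
    {m₁ v₁ e₁ m₂ v₂ e₂ : Fin n →₀ ℕ}
    (hd : m₁ + v₁ = m₂ + v₂)
    (hm₁Q : monomial m₁ (1 : K) ∈ ⨅ j' ∈ τ₁ᶜ, Q j')
    (he₁ : (e₁.support : Set (Fin n)) ⊆ Zvars r Q τ₁) (hme₁ : m₁ = w₁ + e₁)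
    (he₂ : (e₂.support : Set (Fin n)) ⊆ Zvars r Q τ₂) (hme₂ : m₂ = w₂ + e₂)
    (hv₂ : (v₂.support : Set (Fin n)) ⊆ Zvars r Q τ₂ ∪ {i | r ≤ (i : ℕ)}) : False := by
  obtain ⟨T, a, hpos, hQ⟩ := hirr j
  have hjc : j ∈ τ₁ᶜ := Finset.mem_compl.2 hj1
  have hm₁j : monomial m₁ (1 : K) ∈ Q j :=
    (Submodule.mem_iInf _).1 ((Submodule.mem_iInf _).1 hm₁Q j) hjc
  rw [hQ, monomial_mem_pure_power_span] at hm₁j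
  obtain ⟨i, hiT, hai⟩ := hm₁j
  have hai0 : 0 < a i := hpos i hiT
  have hm₁i : 0 < m₁ i := lt_of_lt_of_le hai0 hai
  have hir : (i : ℕ) < r := by
    rw [hme₁, Finsupp.add_apply] at hm₁i
    by_cases hw : w₁ i = 0
    · have he : e₁ i ≠ 0 := by omega
      exact (he₁ (Finsupp.mem_support_iff.2 he)).1
    · exact hw₁.1 (Finsupp.mem_support_iff.2 hw)
  have hXi : (X i : MvPolynomial (Fin n) K) ∈ ∑ j' ∈ τ₂, (Q j').radical := by
    have h1 : (X i : MvPolynomial (Fin n) K) ∈ (Q j).radical := by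
      refine ⟨a i, ?_⟩
      rw [hQ]
      exact Ideal.subset_span ⟨i, hiT, rfl⟩
    exact Finset.single_le_sum (f := fun j' => (Q j').radical) (fun _ _ => zero_le) hj2 h1
  have hiZ : i ∉ Zvars r Q τ₂ := fun h => h.2 hXi
  have he₂i : e₂ i = 0 := by
    by_contra h; exact hiZ (he₂ (Finsupp.mem_support_iff.2 h))
  have hv₂i : v₂ i = 0 := by
    by_contra h
    rcases hv₂ (Finsupp.mem_support_iff.2 h) with h' | h'
    · exact hiZ h'
    · exact absurd hir (not_lt.2 h')
  have hw₂i : a i ≤ w₂ i := by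
    have h1 : a i ≤ (m₁ + v₁) i := le_trans hai (by simp [Finsupp.add_apply])
    rw [hd, hme₂] at h1
    simp only [Finsupp.add_apply, he₂i, hv₂i, add_zero] at h1
    exact h1
  have hw₂Q : monomial w₂ (1 : K) ∈ Q j := by
    rw [hQ, monomial_mem_pure_power_span]; exact ⟨i, hiT, hw₂i⟩
  exact hw₂.2.1 (Finset.single_le_sum (f := Q) (fun _ _ => zero_le) hj2 hw₂Q)

/-- Two summands of the decomposition of `S` corresponding to distinct proper subsets
`τ₁ ≠ τ₂` (with `w₁ ∈ M_{τ₁}`, `w₂ ∈ M_{τ₂}`) intersect trivially. -/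
theorem summands_disjoint_distinct_tau {K : Type*} [Field K] {n s : ℕ} (r : ℕ)
    (hr : r ≤ n) (Q : Fin s → Ideal (MvPolynomial (Fin n) K))
    (hirr : ∀ j, IsPurePowerIdeal (Q j))
    (hirred : ∀ i : Fin s, (⨅ j ∈ Finset.univ.erase i, Q j) ≠ ⨅ j, Q j)
    (τ₁ τ₂ : Finset (Fin s)) (hτ₁ : τ₁ ≠ Finset.univ) (hτ₂ : τ₂ ≠ Finset.univ)
    (hne : τ₁ ≠ τ₂)
    (w₁ w₂ : Fin n →₀ ℕ) (hw₁ : w₁ ∈ Mexp r Q τ₁) (hw₂ : w₂ ∈ Mexp r Q τ₂) :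
    tauSummand r Q τ₁ w₁ ⊓ tauSummand r Q τ₂ w₂ = ⊥ := by
  unfold tauSummand
  apply monSpan_disjoint
  rintro d ⟨m₁, v₁, hd1, hm₁Q, ⟨e₁, he₁, hme₁⟩, hv₁⟩ ⟨m₂, v₂, hd2, hm₂Q, ⟨e₂, he₂, hme₂⟩, hv₂⟩
  have hdd : m₁ + v₁ = m₂ + v₂ := hd1 ▸ hd2
  have hj : ∃ j, ¬(j ∈ τ₁ ↔ j ∈ τ₂) := by
    by_contra h
    push_neg at h
    exact hne (Finset.ext fun j => h j)
  obtain ⟨j, hj⟩ := hj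
  by_cases h1 : j ∈ τ₁
  · have h2 : j ∉ τ₂ := fun h2 => hj ⟨fun _ => h2, fun _ => h1⟩
    exact key_lemma hirr h2 h1 hw₂ hw₁ hdd.symm hm₂Q he₂ hme₂ he₁ hme₁ hv₁
  · have h2 : j ∈ τ₂ := by
      by_contra h2
      exact hj ⟨fun h => absurd h h1, fun h => absurd h h2⟩
    exact key_lemma hirr h1 h2 hw₁ hw₂ hdd hm₁Q he₁ hme₁ he₂ hme₂ hv₂
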